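/- arXiv:1910.11422 — 3 statements merged into one kernel-verified Lean document; each statement's English description precedes it below -/
import Mathlib

section
/- Let (Ω, 𝓕) be a measurable space and let μ and ν be probability measures on Ω with ν absolutely continuous with respect to μ. Then for every measurable function g : Ω → ℝ such that e^g is μ-integrable and g is ν-integrable, one has ∫ g dν − log(∫ e^g dμ) ≤ D_KL(ν‖μ), where D_KL denotes the Kullback–Leibler divergence. -/
open MeasureTheory
open scoped Classical

/-- The Kullback–Leibler divergence `D_KL(ν‖μ) = ∫ log(dν/dμ) dν` when `ν ≪ μ`
(and the log-density ratio is integrable), and `+∞` otherwise, as an extended real. -/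
noncomputable def klDiv {Ω : Type*} [MeasurableSpace Ω] (ν μ : Measure Ω) : EReal :=
  if ν ≪ μ ∧ Integrable (fun x => Real.log ((ν.rnDeriv μ) x).toReal) ν then
    ((∫ x, Real.log ((ν.rnDeriv μ) x).toReal ∂ν : ℝ) : EReal)
  else ⊤

/-- Donsker–Varadhan lower bound: for probability measures `ν ≪ μ` and any measurable `g`
with `e^g` μ-integrable and `g` ν-integrable,
`∫ g dν − log(∫ e^g dμ) ≤ D_KL(ν‖μ)`. -/
theorem donsker_varadhan_lower_bound {Ω : Type*} [MeasurableSpace Ω]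
    (μ ν : Measure Ω) [IsProbabilityMeasure μ] [IsProbabilityMeasure ν]
    (hac : ν ≪ μ) (g : Ω → ℝ) (hg : Measurable g)
    (hexp : Integrable (fun x => Real.exp (g x)) μ)
    (hgi : Integrable g ν) :
    ((∫ x, g x ∂ν - Real.log (∫ x, Real.exp (g x) ∂μ) : ℝ) : EReal) ≤ klDiv ν μ := by
  by_cases hint : Integrable (fun x => Real.log ((ν.rnDeriv μ) x).toReal) ν
  swap
  · rw [klDiv, if_neg (fun h => hint h.2)]; exact le_top
  rw [klDiv, if_pos ⟨hac, hint⟩, EReal.coe_le_coe_iff]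
  set f : Ω → ℝ := fun x => ((ν.rnDeriv μ) x).toReal with hf_def
  have hf_meas : Measurable f := (Measure.measurable_rnDeriv ν μ).ennreal_toReal
  set Z : ℝ := ∫ x, Real.exp (g x) ∂μ with hZ_def
  have hZ_pos : 0 < Z := integral_exp_pos hexp
  -- f > 0 ν-a.e.
  have hf_pos : ∀ᵐ x ∂ν, 0 < f x := by
    filter_upwards [Measure.rnDeriv_pos hac, hac.ae_le (Measure.rnDeriv_lt_top ν μ)]
      with x h1 h2
    exact ENNReal.toReal_pos h1.ne' h2.ne
  -- the auxiliary function h = e^g / f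
  set h : Ω → ℝ := fun x => Real.exp (g x) / f x with hh_def
  have hh_meas : Measurable h := hg.exp.div hf_meas
  have hh_nonneg : ∀ x, 0 ≤ h x := fun x => div_nonneg (Real.exp_pos _).le (ENNReal.toReal_nonneg)
  -- lintegral bound : ∫⁻ h dν ≤ ∫⁻ e^g dμ
  have hlin : ∫⁻ x, ENNReal.ofReal (h x) ∂ν ≤ ∫⁻ x, ENNReal.ofReal (Real.exp (g x)) ∂μ := by
    rw [← lintegral_rnDeriv_mul hac (hh_meas.ennreal_ofReal.aemeasurable)]
    refine lintegral_mono_ae ?_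
    filter_upwards [Measure.rnDeriv_lt_top ν μ] with x hx
    rcases eq_or_ne (ν.rnDeriv μ x) 0 with h0 | h0
    · simp [h0]
    · have htr : 0 < (ν.rnDeriv μ x).toReal := ENNReal.toReal_pos h0 hx.ne
      rw [hh_def]
      simp only
      rw [ENNReal.ofReal_div_of_pos htr, ENNReal.ofReal_toReal hx.ne,
        ENNReal.mul_div_cancel h0 hx.ne]
  have hfin : ∫⁻ x, ENNReal.ofReal (Real.exp (g x)) ∂μ < ⊤ := hexp.lintegral_lt_top
  -- h is ν-integrable
  have hh_int : Integrable h ν := by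
    refine ⟨hh_meas.aestronglyMeasurable, ?_⟩
    rw [hasFiniteIntegral_iff_ofReal (Filter.Eventually.of_forall hh_nonneg)]
    exact lt_of_le_of_lt hlin hfin
  -- ∫ h dν ≤ Z
  have hh_le : ∫ x, h x ∂ν ≤ Z := by
    rw [integral_eq_lintegral_of_nonneg_ae (Filter.Eventually.of_forall hh_nonneg)
      hh_meas.aestronglyMeasurable, hZ_def,
      integral_eq_lintegral_of_nonneg_ae
        (Filter.Eventually.of_forall fun x => (Real.exp_pos (g x)).le)
        hg.exp.aestronglyMeasurable]
    exact ENNReal.toReal_mono hfin.ne hlin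
  -- pointwise inequality
  have hpt : ∀ᵐ x ∂ν, g x - Real.log Z - Real.log (f x) ≤ h x / Z - 1 := by
    filter_upwards [hf_pos] with x hx
    have hpos : 0 < Real.exp (g x) / (Z * f x) :=
      div_pos (Real.exp_pos _) (mul_pos hZ_pos hx)
    have := Real.log_le_sub_one_of_pos hpos
    rw [Real.log_div (Real.exp_pos _).ne' (mul_pos hZ_pos hx).ne', Real.log_exp,
      Real.log_mul hZ_pos.ne' hx.ne'] at this
    calc g x - Real.log Z - Real.log (f x)
        ≤ Real.exp (g x) / (Z * f x) - 1 := by linarith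
      _ = h x / Z - 1 := by rw [hh_def]; ring_nf
  -- integrate
  have hint2 : Integrable (fun x => g x - Real.log Z - Real.log (f x)) ν :=
    (hgi.sub (integrable_const _)).sub hint
  have hint3 : Integrable (fun x => h x / Z - 1) ν :=
    (hh_int.div_const Z).sub (integrable_const 1)
  have hmono := integral_mono_ae hint2 hint3 hpt
  have e1 : ∫ a, (g a - Real.log Z - Real.log (f a)) ∂ν
      = (∫ a, g a ∂ν) - Real.log Z - ∫ a, Real.log (f a) ∂ν := by
    rw [integral_sub (f := fun a => g a - Real.log Z) (hgi.sub (integrable_const _)) hint,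
      integral_sub hgi (integrable_const _), integral_const]
    simp
    rfl
  have e2 : ∫ a, (h a / Z - 1) ∂ν = (∫ a, h a ∂ν) / Z - 1 := by
    rw [integral_sub (f := fun a => h a / Z) (hh_int.div_const Z) (integrable_const 1),
      integral_div, integral_const]
    simp
  rw [e1, e2] at hmono
  have hfrac : (∫ x, h x ∂ν) / Z ≤ 1 := (div_le_one hZ_pos).mpr hh_le
  linarith
end

section
/- Let d > 0, let m ∈ ℝⁿ, and define G : ℝⁿ → ℝ by G(x) = exp(−‖x − m‖²/(2d²)). Then for every x ∈ ℝⁿ and every unit vector v ∈ ℝⁿ, the second derivative at t = 0 of the function t ↦ G(x + t·v) is at most 2/(d²·e^{3/2}); moreover 2/(d²·e^{3/2}) < 1/(2d²). -/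
lemma quad_hasDerivAt (α β γ t : ℝ) :
    HasDerivAt (fun s : ℝ => Real.exp (α + β * s + γ * s ^ 2))
      ((β + 2 * γ * t) * Real.exp (α + β * t + γ * t ^ 2)) t := by
  have h : HasDerivAt (fun s : ℝ => α + β * s + γ * s ^ 2) (β + 2 * γ * t) t := by
    have h1 : HasDerivAt (fun s : ℝ => α + β * s + γ * s ^ 2)
        (0 + β * 1 + γ * (↑2 * t ^ 1)) t :=
      ((hasDerivAt_const t α).add ((hasDerivAt_id t).const_mul β)).add
        ((hasDerivAt_pow 2 t).const_mul γ)
    convert h1 using 1; push_cast; ring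
  simpa [mul_comm] using h.exp

lemma quad_second_deriv (α β γ : ℝ) :
    iteratedDeriv 2 (fun t : ℝ => Real.exp (α + β * t + γ * t ^ 2)) 0
      = (β ^ 2 + 2 * γ) * Real.exp α := by
  have hd : deriv (fun t : ℝ => Real.exp (α + β * t + γ * t ^ 2))
      = fun t => (β + 2 * γ * t) * Real.exp (α + β * t + γ * t ^ 2) := by
    funext t; exact (quad_hasDerivAt α β γ t).deriv
  rw [show (2 : ℕ) = 1 + 1 from rfl, iteratedDeriv_succ, iteratedDeriv_one, hd]
  have h2 : HasDerivAt (fun t : ℝ => (β + 2 * γ * t) * Real.exp (α + β * t + γ * t ^ 2))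
      ((2 * γ) * Real.exp (α + β * 0 + γ * 0 ^ 2)
        + (β + 2 * γ * 0) * ((β + 2 * γ * 0) * Real.exp (α + β * 0 + γ * 0 ^ 2))) 0 := by
    have hlin : HasDerivAt (fun t : ℝ => β + 2 * γ * t) (2 * γ) 0 := by
      simpa using (hasDerivAt_id (0:ℝ)).const_mul (2*γ) |>.const_add β
    exact hlin.mul (quad_hasDerivAt α β γ 0)
  rw [h2.deriv]; ring_nf

lemma key_exp_ineq (w : ℝ) : (2 * w - 1) * Real.exp (-w) ≤ 2 * Real.exp (-(3/2)) := by
  have h := Real.add_one_le_exp (w - 3/2)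
  have hew : Real.exp (w - 3/2) * Real.exp (-w) = Real.exp (-(3/2)) := by
    rw [← Real.exp_add]; ring_nf
  have hp := Real.exp_pos (-w)
  nlinarith [Real.exp_pos (w - 3/2)]

/-- Second-derivative bound for the radial basis function `G(x) = exp(−‖x − m‖²/(2d²))`:
for every `x` and every unit vector `v`, the second derivative at `t = 0` of
`t ↦ G(x + t·v)` is at most `2/(d²·e^{3/2})`; moreover `2/(d²·e^{3/2}) < 1/(2d²)`. -/
theorem rbf_second_derivative_bound (n : ℕ) (d : ℝ) (hd : 0 < d)
    (m : EuclideanSpace ℝ (Fin n)) (G : EuclideanSpace ℝ (Fin n) → ℝ)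
    (hG : ∀ x, G x = Real.exp (-‖x - m‖ ^ 2 / (2 * d ^ 2)))
    (x v : EuclideanSpace ℝ (Fin n)) (hv : ‖v‖ = 1) :
    iteratedDeriv 2 (fun t : ℝ => G (x + t • v)) 0 ≤ 2 / (d ^ 2 * Real.exp (3 / 2)) ∧
      2 / (d ^ 2 * Real.exp (3 / 2)) < 1 / (2 * d ^ 2) := by
  have hd2 : (0:ℝ) < d ^ 2 := by positivity
  set c : ℝ := ‖x - m‖ ^ 2 with hc
  set b : ℝ := inner ℝ (x - m) v with hb
  -- rewrite the function as a quadratic-exponential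
  have hfun : (fun t : ℝ => G (x + t • v))
      = fun t : ℝ => Real.exp (-c / (2 * d ^ 2) + (-b / d ^ 2) * t + (-1 / (2 * d ^ 2)) * t ^ 2) := by
    funext t
    rw [hG]
    congr 1
    have hnorm : ‖x + t • v - m‖ ^ 2 = c + 2 * (t * b) + t ^ 2 := by
      have : x + t • v - m = (x - m) + t • v := by abel
      rw [this, @norm_add_sq_real, real_inner_smul_right, norm_smul]
      simp [hv, hb, hc, mul_pow, abs_sq]
    rw [hnorm]; field_simp; ring
  rw [hfun, quad_second_deriv]
  constructor
  · -- main bound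
    have hb2c : b ^ 2 ≤ c := by
      have h1 : |b| ≤ ‖x - m‖ * ‖v‖ := abs_real_inner_le_norm _ _
      have h2 : |b| ≤ ‖x - m‖ := by simpa [hv] using h1
      calc b ^ 2 = |b| ^ 2 := (sq_abs b).symm
        _ ≤ ‖x - m‖ ^ 2 := by nlinarith [abs_nonneg b]
    set w : ℝ := b ^ 2 / (2 * d ^ 2) with hw
    have hwnn : 0 ≤ w := by positivity
    have hexp32 : Real.exp (-(3/2)) = 1 / Real.exp (3/2) := by
      rw [Real.exp_neg]; ring
    have hkey : (2 * w - 1) * Real.exp (-w) ≤ 2 * Real.exp (-(3/2)) := key_exp_ineq w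
    have hval : ((-b / d ^ 2) ^ 2 + 2 * (-1 / (2 * d ^ 2))) = (2 * w - 1) / d ^ 2 := by
      rw [hw]; field_simp; ring
    rw [hval]
    rcases le_or_gt (2 * w) 1 with hle | hgt
    · have h1 : (2 * w - 1) / d ^ 2 ≤ 0 := by
        apply div_nonpos_of_nonpos_of_nonneg <;> nlinarith
      have h2 : (2 * w - 1) / d ^ 2 * Real.exp (-c / (2 * d ^ 2)) ≤ 0 :=
        mul_nonpos_of_nonpos_of_nonneg h1 (Real.exp_pos _).le
      have h3 : (0:ℝ) ≤ 2 / (d ^ 2 * Real.exp (3/2)) := by positivity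
      linarith
    · have hcw : -c / (2 * d ^ 2) ≤ -w := by
        have hrw : -w = -(b ^ 2) / (2 * d ^ 2) := by rw [hw]; ring
        rw [hrw]
        gcongr
      have hmono : Real.exp (-c / (2 * d ^ 2)) ≤ Real.exp (-w) := Real.exp_le_exp.mpr hcw
      have hfac : (0:ℝ) ≤ (2 * w - 1) / d ^ 2 := by
        apply div_nonneg _ hd2.le; linarith
      have h1 : (2 * w - 1) / d ^ 2 * Real.exp (-c / (2 * d ^ 2))
          ≤ (2 * w - 1) / d ^ 2 * Real.exp (-w) := by
        exact mul_le_mul_of_nonneg_left hmono hfac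
      have h2 : (2 * w - 1) / d ^ 2 * Real.exp (-w) ≤ 2 / (d ^ 2 * Real.exp (3/2)) := by
        rw [div_mul_eq_mul_div, div_le_div_iff₀ hd2 (by positivity)]
        calc (2 * w - 1) * Real.exp (-w) * (d ^ 2 * Real.exp (3/2))
            ≤ 2 * Real.exp (-(3/2)) * (d ^ 2 * Real.exp (3/2)) := by
              apply mul_le_mul_of_nonneg_right hkey (by positivity)
          _ = 2 * d ^ 2 * (Real.exp (-(3/2)) * Real.exp (3/2)) := by ring
          _ = 2 * d ^ 2 := by rw [← Real.exp_add]; simp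
      linarith
  · -- numeric inequality 2/(d² e^{3/2}) < 1/(2 d²)  ⟺  4 < e^{3/2}
    have he : (4:ℝ) < Real.exp (3/2) := by
      have h1 : Real.exp (3/2) = Real.exp 1 * Real.exp (1/2) := by
        rw [← Real.exp_add]; norm_num
      have h2 : (2.7182818283 : ℝ) < Real.exp 1 := Real.exp_one_gt_d9
      have h3 : (1.5 : ℝ) ≤ Real.exp (1/2) := by
        have := Real.add_one_le_exp (1/2 : ℝ); linarith
      rw [h1]; nlinarith
    rw [div_lt_div_iff₀ (by positivity) (by positivity)]
    nlinarith
end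

section
/- Let d > 0, let m ∈ ℝⁿ, and let c ∈ [0, 1]. Then the function f : ℝⁿ → ℝ given by f(x) = ‖x‖²/(4d²) − c·exp(−‖x − m‖²/(2d²)) is convex on ℝⁿ. -/
open Real Set RealInnerProductSpace

private lemma key_ineq {s : ℝ} (hs : 0 ≤ s) : (s - 1) * Real.exp (-(s / 2)) ≤ 1 / 2 := by
  rcases le_or_gt s 1 with h | h
  · have h1 : (s - 1) * Real.exp (-(s / 2)) ≤ 0 :=
      mul_nonpos_of_nonpos_of_nonneg (by linarith) (Real.exp_pos _).le
    linarith
  · have htay : 1 + s / 2 + (s / 2) ^ 2 / 2 + (s / 2) ^ 3 / 6 ≤ Real.exp (s / 2) := by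
      have h4 := Real.sum_le_exp_of_nonneg (x := s / 2) (by linarith) 4
      simp [Finset.sum_range_succ, Nat.factorial] at h4
      nlinarith [h4]
    have hpoly : 2 * (s - 1) ≤ 1 + s / 2 + (s / 2) ^ 2 / 2 + (s / 2) ^ 3 / 6 := by
      nlinarith [mul_nonneg hs (sq_nonneg (s - 7 / 2)), sq_nonneg (s - 337 / 104)]
    have h2 : s - 1 ≤ Real.exp (s / 2) / 2 := by linarith
    calc (s - 1) * Real.exp (-(s / 2)) ≤ Real.exp (s / 2) / 2 * Real.exp (-(s / 2)) :=
          mul_le_mul_of_nonneg_right h2 (Real.exp_pos _).le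
      _ = 1 / 2 := by
          rw [div_mul_eq_mul_div, ← Real.exp_add]
          norm_num

private lemma quantbound (d c C P r E : ℝ) (hd2 : 0 < d ^ 2) (hc0 : 0 ≤ c) (hc1 : c ≤ 1)
    (hC : 0 ≤ C) (hr : 0 ≤ r) (hPr : P ^ 2 ≤ 4 * C * r)
    (hEdef : E = Real.exp (-r / (2 * d ^ 2))) :
    0 ≤ 2 * C / (4 * d ^ 2)
      + c * (2 * C / (2 * d ^ 2) * E + P / (2 * d ^ 2) * (E * (-P / (2 * d ^ 2)))) := by
  have hEpos : 0 < E := hEdef ▸ Real.exp_pos _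
  have crucial : c * E * (P ^ 2 - 4 * C * d ^ 2) ≤ 2 * C * d ^ 2 := by
    rcases le_or_gt (P ^ 2) (4 * C * d ^ 2) with hcase | hcase
    · have h1 : c * E * (P ^ 2 - 4 * C * d ^ 2) ≤ 0 :=
        mul_nonpos_of_nonneg_of_nonpos (mul_nonneg hc0 hEpos.le) (by linarith)
      nlinarith
    · have hkey := key_ineq (s := r / d ^ 2) (by positivity)
      have harg : -(r / d ^ 2 / 2) = -r / (2 * d ^ 2) := by ring
      rw [harg, ← hEdef] at hkey
      have h1 : c * E * (P ^ 2 - 4 * C * d ^ 2) ≤ E * (P ^ 2 - 4 * C * d ^ 2) := by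
        nlinarith [mul_nonneg (sub_nonneg.2 hc1)
          (mul_nonneg hEpos.le (by linarith : (0:ℝ) ≤ P ^ 2 - 4 * C * d ^ 2))]
      have h2 : E * (P ^ 2 - 4 * C * d ^ 2) ≤ E * (4 * C * r - 4 * C * d ^ 2) :=
        mul_le_mul_of_nonneg_left (by linarith) hEpos.le
      have h3 : E * (4 * C * r - 4 * C * d ^ 2) = 4 * C * d ^ 2 * ((r / d ^ 2 - 1) * E) := by
        have hd0 : d ≠ 0 := by rintro rfl; simp at hd2
        field_simp
      have hC' : (0:ℝ) ≤ 4 * C * d ^ 2 := by positivity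
      have h4 : 4 * C * d ^ 2 * ((r / d ^ 2 - 1) * E) ≤ 4 * C * d ^ 2 * (1 / 2) :=
        mul_le_mul_of_nonneg_left hkey hC'
      linarith
  have heq : 2 * C / (4 * d ^ 2)
      + c * (2 * C / (2 * d ^ 2) * E + P / (2 * d ^ 2) * (E * (-P / (2 * d ^ 2))))
      = (2 * C * d ^ 2 - c * E * (P ^ 2 - 4 * C * d ^ 2)) / (4 * d ^ 4) := by
    have h4 : (0:ℝ) < 4 * d ^ 4 := by nlinarith [mul_pos hd2 hd2]
    rw [eq_div_iff h4.ne']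
    have hd0 : d ≠ 0 := by rintro rfl; simp at hd2
    field_simp
    ring
  rw [heq]
  exact div_nonneg (by linarith) (by positivity)

private lemma oneD (d : ℝ) (hd : 0 < d) (c : ℝ) (hc0 : 0 ≤ c) (hc1 : c ≤ 1)
    (C A₁ B₁ A₂ B₂ : ℝ) (hC : 0 ≤ C)
    (hq : ∀ t : ℝ, 0 ≤ C * t ^ 2 + B₂ * t + A₂)
    (hCS : ∀ t : ℝ, (2 * C * t + B₂) ^ 2 ≤ 4 * C * (C * t ^ 2 + B₂ * t + A₂)) :
    ConvexOn ℝ univ (fun t : ℝ =>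
      (C * t ^ 2 + B₁ * t + A₁) / (4 * d ^ 2)
        - c * Real.exp (-(C * t ^ 2 + B₂ * t + A₂) / (2 * d ^ 2))) := by
  have hd2 : (0:ℝ) < d ^ 2 := by positivity
  -- derivative of the inner quadratics
  have hqd : ∀ (B A : ℝ) (t : ℝ),
      HasDerivAt (fun t : ℝ => C * t ^ 2 + B * t + A) (2 * C * t + B) t := by
    intro B A t
    have h1 : HasDerivAt (fun t : ℝ => t ^ 2) (2 * t) t := by
      simpa using hasDerivAt_pow 2 t
    have h2 := ((h1.const_mul C).add ((hasDerivAt_id t).const_mul B)).add_const A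
    exact h2.congr_deriv (by ring)
  -- derivative of the exponential factor
  have hE : ∀ t : ℝ,
      HasDerivAt (fun t : ℝ => Real.exp (-(C * t ^ 2 + B₂ * t + A₂) / (2 * d ^ 2)))
        (Real.exp (-(C * t ^ 2 + B₂ * t + A₂) / (2 * d ^ 2)) * (-(2 * C * t + B₂) / (2 * d ^ 2)))
        t := by
    intro t
    have h := ((hqd B₂ A₂ t).neg.div_const (2 * d ^ 2)).exp
    convert h using 2 <;> rfl
  set g1 : ℝ → ℝ := fun t =>
    (2 * C * t + B₁) / (4 * d ^ 2)
      + c * ((2 * C * t + B₂) / (2 * d ^ 2))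
          * Real.exp (-(C * t ^ 2 + B₂ * t + A₂) / (2 * d ^ 2)) with hg1def
  have hg' : ∀ t : ℝ, HasDerivAt (fun t : ℝ =>
      (C * t ^ 2 + B₁ * t + A₁) / (4 * d ^ 2)
        - c * Real.exp (-(C * t ^ 2 + B₂ * t + A₂) / (2 * d ^ 2))) (g1 t) t := by
    intro t
    have h := ((hqd B₁ A₁ t).div_const (4 * d ^ 2)).sub ((hE t).const_mul c)
    refine h.congr_deriv ?_
    simp only [hg1def]
    ring
  set g2 : ℝ → ℝ := fun t =>
    2 * C / (4 * d ^ 2)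
      + c * (2 * C / (2 * d ^ 2) * Real.exp (-(C * t ^ 2 + B₂ * t + A₂) / (2 * d ^ 2))
          + (2 * C * t + B₂) / (2 * d ^ 2)
            * (Real.exp (-(C * t ^ 2 + B₂ * t + A₂) / (2 * d ^ 2))
                * (-(2 * C * t + B₂) / (2 * d ^ 2)))) with hg2def
  have hg1' : ∀ t : ℝ, HasDerivAt g1 (g2 t) t := by
    intro t
    have hlin : HasDerivAt (fun t : ℝ => (2 * C * t + B₁) / (4 * d ^ 2))
        (2 * C / (4 * d ^ 2)) t := by
      have h := (((hasDerivAt_id t).const_mul (2 * C)).add_const B₁).div_const (4 * d ^ 2)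
      exact h.congr_deriv (by ring)
    have hP : HasDerivAt (fun t : ℝ => c * ((2 * C * t + B₂) / (2 * d ^ 2)))
        (c * (2 * C / (2 * d ^ 2))) t := by
      have h := ((((hasDerivAt_id t).const_mul (2 * C)).add_const B₂).div_const
        (2 * d ^ 2)).const_mul c
      exact h.congr_deriv (by ring)
    have h := hlin.add (hP.mul (hE t))
    refine h.congr_deriv ?_
    simp only [hg2def]
    ring
  have hderiv1 : deriv (fun t : ℝ =>
      (C * t ^ 2 + B₁ * t + A₁) / (4 * d ^ 2)
        - c * Real.exp (-(C * t ^ 2 + B₂ * t + A₂) / (2 * d ^ 2))) = g1 :=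
    funext fun t => (hg' t).deriv
  apply convexOn_univ_of_deriv2_nonneg
  · exact fun t => (hg' t).differentiableAt
  · rw [hderiv1]
    exact fun t => (hg1' t).differentiableAt
  · intro t
    have h2 : deriv^[2] (fun t : ℝ =>
        (C * t ^ 2 + B₁ * t + A₁) / (4 * d ^ 2)
          - c * Real.exp (-(C * t ^ 2 + B₂ * t + A₂) / (2 * d ^ 2))) t = g2 t := by
      rw [Function.iterate_succ_apply', Function.iterate_one, hderiv1]
      exact (hg1' t).deriv
    rw [h2]
    simp only [hg2def]
    exact quantbound d c C (2 * C * t + B₂) (C * t ^ 2 + B₂ * t + A₂) _ hd2 hc0 hc1 hC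
      (hq t) (hCS t) rfl

/-- For `d > 0`, `m ∈ ℝⁿ` and `c ∈ [0, 1]`, the function
`f(x) = ‖x‖²/(4d²) − c·exp(−‖x − m‖²/(2d²))` is convex on `ℝⁿ`. -/
theorem quadratic_minus_gaussian_convex (n : ℕ) (d : ℝ) (hd : 0 < d)
    (m : EuclideanSpace ℝ (Fin n)) (c : ℝ) (hc : c ∈ Set.Icc (0 : ℝ) 1) :
    ConvexOn ℝ Set.univ (fun x : EuclideanSpace ℝ (Fin n) =>
      ‖x‖ ^ 2 / (4 * d ^ 2) - c * Real.exp (-‖x - m‖ ^ 2 / (2 * d ^ 2))) := by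
  obtain ⟨hc0, hc1⟩ := hc
  refine ⟨convex_univ, ?_⟩
  intro x _ y _ a b ha hb hab
  set v : EuclideanSpace ℝ (Fin n) := y - x with hvdef
  -- expansion of the norms along the line x + t • v
  have hexp : ∀ (w : EuclideanSpace ℝ (Fin n)) (t : ℝ),
      ‖w + t • v‖ ^ 2 = ‖v‖ ^ 2 * t ^ 2 + 2 * ⟪w, v⟫ * t + ‖w‖ ^ 2 := by
    intro w t
    rw [norm_add_sq_real, real_inner_smul_right, norm_smul]
    rw [Real.norm_eq_abs, mul_pow, sq_abs]
    ring
  have hq : ∀ t : ℝ, 0 ≤ ‖v‖ ^ 2 * t ^ 2 + 2 * ⟪x - m, v⟫ * t + ‖x - m‖ ^ 2 := by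
    intro t
    rw [← hexp (x - m) t]
    positivity
  have hCS : ∀ t : ℝ, (2 * ‖v‖ ^ 2 * t + 2 * ⟪x - m, v⟫) ^ 2
      ≤ 4 * ‖v‖ ^ 2 * (‖v‖ ^ 2 * t ^ 2 + 2 * ⟪x - m, v⟫ * t + ‖x - m‖ ^ 2) := by
    intro t
    have h1 : 2 * ‖v‖ ^ 2 * t + 2 * ⟪x - m, v⟫ = 2 * ⟪x - m + t • v, v⟫ := by
      rw [inner_add_left, real_inner_smul_left, real_inner_self_eq_norm_sq]
      ring
    have h2 := real_inner_mul_inner_self_le (x - m + t • v) v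
    rw [real_inner_self_eq_norm_sq, real_inner_self_eq_norm_sq] at h2
    rw [h1, ← hexp (x - m) t]
    nlinarith [h2]
  have hline := oneD d hd c hc0 hc1 (‖v‖ ^ 2) (‖x‖ ^ 2) (2 * ⟪x, v⟫)
    (‖x - m‖ ^ 2) (2 * ⟪x - m, v⟫) (by positivity) hq hCS
  have hg := hline.2 (mem_univ (0 : ℝ)) (mem_univ (1 : ℝ)) ha hb hab
  have hab' : a • (0 : ℝ) + b • (1 : ℝ) = b := by simp
  rw [hab'] at hg
  have hpt : a • x + b • y = x + b • v := by
    rw [hvdef, smul_sub]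
    have hba : a = 1 - b := by linarith
    rw [hba, sub_smul, one_smul]
    abel
  have hval : ∀ t : ℝ,
      (‖v‖ ^ 2 * t ^ 2 + 2 * ⟪x, v⟫ * t + ‖x‖ ^ 2) / (4 * d ^ 2)
        - c * Real.exp (-(‖v‖ ^ 2 * t ^ 2 + 2 * ⟪x - m, v⟫ * t + ‖x - m‖ ^ 2) / (2 * d ^ 2))
      = ‖x + t • v‖ ^ 2 / (4 * d ^ 2)
        - c * Real.exp (-‖x + t • v - m‖ ^ 2 / (2 * d ^ 2)) := by
    intro t
    have h1 : x + t • v - m = x - m + t • v := by abel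
    rw [h1, hexp (x - m) t, hexp x t]
  have hE0 : x + (0 : ℝ) • v = x := by simp
  have hE1 : x + (1 : ℝ) • v = y := by rw [one_smul, hvdef]; abel
  have h0 : (‖v‖ ^ 2 * (0:ℝ) ^ 2 + 2 * ⟪x, v⟫ * 0 + ‖x‖ ^ 2) / (4 * d ^ 2)
        - c * Real.exp (-(‖v‖ ^ 2 * (0:ℝ) ^ 2 + 2 * ⟪x - m, v⟫ * 0 + ‖x - m‖ ^ 2) / (2 * d ^ 2))
      = ‖x‖ ^ 2 / (4 * d ^ 2) - c * Real.exp (-‖x - m‖ ^ 2 / (2 * d ^ 2)) := by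
    rw [hval 0, hE0]
  have h1 : (‖v‖ ^ 2 * (1:ℝ) ^ 2 + 2 * ⟪x, v⟫ * 1 + ‖x‖ ^ 2) / (4 * d ^ 2)
        - c * Real.exp (-(‖v‖ ^ 2 * (1:ℝ) ^ 2 + 2 * ⟪x - m, v⟫ * 1 + ‖x - m‖ ^ 2) / (2 * d ^ 2))
      = ‖y‖ ^ 2 / (4 * d ^ 2) - c * Real.exp (-‖y - m‖ ^ 2 / (2 * d ^ 2)) := by
    rw [hval 1, hE1]
  simp only [smul_eq_mul] at hg ⊢
  rw [hpt, ← hval b, ← h0, ← h1]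
  exact hg
end
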